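/- The kernel of the identity operator I : SV → SV ⊂ SV' is the preferred Gaussian e^{Z_V} ∈ SV_ℂ': for all φ, ψ ∈ SV, ⟨ψ|φ⟩ = e^{Z_V}(ψ₊φ₋). -/

import Mathlib

open scoped ComplexConjugate

noncomputable section

section Defs

variable {V W A : Type} [AddCommGroup V] [Module ℂ V] [CommRing A] [Algebra ℂ A]

/-- `A` (with embedding `ι`) is the symmetric algebra of `V`: universal property. -/
def IsSymmAlg (ι : V →ₗ[ℂ] A) : Prop :=
  ∀ (B : Type) [CommRing B] [Algebra ℂ B] (f : V →ₗ[ℂ] B),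
    ∃! F : A →ₐ[ℂ] B, ∀ v, F (ι v) = f v

/-- The span of `n`-fold products of generators: the degree-`n` part. -/
def GradeOf (gen : W → A) (n : ℕ) : Submodule ℂ A :=
  Submodule.span ℂ {a | ∃ f : Fin n → W, a = ∏ i, gen (f i)}

/-- The algebra is spanned by products of generators. -/
def SpanProdsOf (gen : W → A) : Prop :=
  ∀ x : A, x ∈ Submodule.span ℂ {a | ∃ (n : ℕ) (f : Fin n → W), a = ∏ i, gen (f i)}

/-- A quadratic: an antilinear functional concentrated in degree 2. -/
def IsQuadOf (gen : W → A) (ζ : A →ₗ⋆[ℂ] ℂ) : Prop :=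
  ∀ n : ℕ, n ≠ 2 → ∀ φ ∈ GradeOf gen n, ζ φ = 0

/-- The commutative product on the full antidual induced by the coproduct,
characterized on products of generators. -/
def IsConvProdOf (gen : W → A)
    (mul : (A →ₗ⋆[ℂ] ℂ) → (A →ₗ⋆[ℂ] ℂ) → (A →ₗ⋆[ℂ] ℂ)) : Prop :=
  ∀ (Φ Ψ : A →ₗ⋆[ℂ] ℂ) (n : ℕ) (v : Fin n → W),
    mul Φ Ψ (∏ i, gen (v i)) =
      ∑ S : Finset (Fin n), Φ (∏ i ∈ S, gen (v i)) * Ψ (∏ i ∈ Sᶜ, gen (v i))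

/-- The counit (unit of the antidual algebra): kills products of at least one generator. -/
def IsCounitOf (gen : W → A) (ε : A →ₗ⋆[ℂ] ℂ) : Prop :=
  ∀ (n : ℕ) (v : Fin n → W), ε (∏ i, gen (v i)) = if n = 0 then 1 else 0

/-- Powers of a functional with respect to the convolution product. -/
def powD (mul : (A →ₗ⋆[ℂ] ℂ) → (A →ₗ⋆[ℂ] ℂ) → (A →ₗ⋆[ℂ] ℂ))
    (ε ζ : A →ₗ⋆[ℂ] ℂ) : ℕ → (A →ₗ⋆[ℂ] ℂ)
  | 0 => ε
  | n + 1 => mul ζ (powD mul ε ζ n)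

/-- `E` is the Gaussian `exp ζ = Σ ζⁿ/n!` (a finite sum in each degree). -/
def IsGaussianOf (gen : W → A)
    (mul : (A →ₗ⋆[ℂ] ℂ) → (A →ₗ⋆[ℂ] ℂ) → (A →ₗ⋆[ℂ] ℂ))
    (ε ζ E : A →ₗ⋆[ℂ] ℂ) : Prop :=
  ∀ k : ℕ, ∀ ψ ∈ GradeOf gen k,
    E ψ = ∑ n ∈ Finset.range (k + 1), ((n.factorial : ℂ))⁻¹ * powD mul ε ζ n ψ

end Defs

section Defs2

variable {V A : Type} [NormedAddCommGroup V] [InnerProductSpace ℂ V]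
  [CommRing A] [Algebra ℂ A]

/-- The family of annihilation operators: derivations killing `1` with
`a v (ι w) = ⟨v|w⟩ 1`. -/
def IsAnn (ι : V →ₗ[ℂ] A) (a : V → A →ₗ[ℂ] A) : Prop :=
  ∀ v : V, (∀ x y : A, a v (x * y) = a v x * y + x * a v y) ∧
    a v 1 = 0 ∧ ∀ w : V, a v (ι w) = (inner ℂ v w : ℂ) • (1 : A)

/-- The canonical inner product on the symmetric algebra: graded pieces are
orthogonal and the permanent formula holds. (Antilinear in the first slot.) -/
def IsCanonInner (ι : V →ₗ[ℂ] A) (Bf : A →ₗ⋆[ℂ] A →ₗ[ℂ] ℂ) : Prop :=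
  (∀ (k n : ℕ), k ≠ n → ∀ (x : Fin k → V) (y : Fin n → V),
      Bf (∏ i, ι (x i)) (∏ i, ι (y i)) = 0) ∧
  ∀ (n : ℕ) (x y : Fin n → V),
      Bf (∏ i, ι (x i)) (∏ i, ι (y i)) =
        ∑ p : Equiv.Perm (Fin n), ∏ i, (inner ℂ (x i) (y (p i)) : ℂ)

/-- Iterated annihilation `a(vₙ)⋯a(v₁)φ` (applying `a(v₁)` first). -/
def iterAnn (a : V → A →ₗ[ℂ] A) : (n : ℕ) → (Fin n → V) → A → A
  | 0, _, φ => φ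
  | n + 1, v, φ => a (v (Fin.last n)) (iterAnn a n (fun i => v i.castSucc) φ)

/-- A symmetric bi-antilinear map `V × V → ℂ`. -/
def IsSymAnti (Z : V → V → ℂ) : Prop :=
  (∀ x y, Z x y = Z y x) ∧
  (∀ x y y', Z x (y + y') = Z x y + Z x y') ∧
  (∀ (c : ℂ) (x y : V), Z x (c • y) = conj c * Z x y)

end Defs2

section DefsC

variable {A AC : Type} [CommRing A] [Algebra ℂ A] [CommRing AC] [Algebra ℂ AC]

/-- An antilinear (conjugate-linear) algebra morphism, such as `φ ↦ φ₋`. -/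
def IsAntiAlgHom (m : A → AC) : Prop :=
  (∀ x y : A, m (x + y) = m x + m y) ∧ (∀ (c : ℂ) (x : A), m (c • x) = conj c • m x) ∧
  (∀ x y : A, m (x * y) = m x * m y) ∧ m 1 = 1

end DefsC

section WickAux


/-- Wick-type recursive sum over ordered pairings between two finsets. -/
def wick {α β : Type} [DecidableEq α] [DecidableEq β] (g : α → β → ℂ) :
    ℕ → Finset α → Finset β → ℂ
  | 0, T, U => if T = ∅ ∧ U = ∅ then 1 else 0
  | N + 1, T, U => ∑ i ∈ T, ∑ j ∈ U, g i j * wick g N (T.erase i) (U.erase j)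

variable {α β : Type} [DecidableEq α] [DecidableEq β] (g : α → β → ℂ)

theorem wick_eq_zero_left : ∀ (N : ℕ) (T : Finset α) (U : Finset β),
    T.card ≠ N → wick g N T U = 0 := by
  intro N
  induction N with
  | zero =>
    intro T U h
    simp only [wick, ite_eq_right_iff, and_imp]
    intro hT _; exact absurd (by simp [hT]) h
  | succ N ih =>
    intro T U h
    rw [wick]
    refine Finset.sum_eq_zero fun i hi => Finset.sum_eq_zero fun j hj => ?_
    have hpos := Finset.card_pos.mpr ⟨i, hi⟩
    rw [ih _ _ (by rw [Finset.card_erase_of_mem hi]; omega), mul_zero]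

theorem wick_eq_zero_right : ∀ (N : ℕ) (T : Finset α) (U : Finset β),
    U.card ≠ N → wick g N T U = 0 := by
  intro N
  induction N with
  | zero =>
    intro T U h
    simp only [wick, ite_eq_right_iff, and_imp]
    intro _ hU; exact absurd (by simp [hU]) h
  | succ N ih =>
    intro T U h
    rw [wick]
    refine Finset.sum_eq_zero fun i hi => Finset.sum_eq_zero fun j hj => ?_
    have hpos := Finset.card_pos.mpr ⟨j, hj⟩
    rw [ih _ _ (by rw [Finset.card_erase_of_mem hj]; omega), mul_zero]

theorem wick_pick : ∀ (N : ℕ) (T : Finset α) (U : Finset β) (i₀ : α), i₀ ∈ T →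
    wick g (N + 1) T U =
      ((N : ℂ) + 1) * ∑ j ∈ U, g i₀ j * wick g N (T.erase i₀) (U.erase j) := by
  intro N
  induction N with
  | zero =>
    intro T U i₀ h0
    rw [wick]
    rw [Finset.sum_eq_single i₀ (fun i hi hne => Finset.sum_eq_zero fun j hj => by
      rw [wick_eq_zero_left g 0 _ _ (by
        simp only [ne_eq, Finset.card_eq_zero, Finset.erase_eq_empty_iff]
        push_neg
        refine ⟨?_, ?_⟩
        · exact ⟨i₀, h0⟩
        · rintro rfl; exact hne (Finset.mem_singleton.mp h0).symm), mul_zero])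
      (fun h => absurd h0 h)]
    norm_num
  | succ N ih =>
    intro T U i₀ h0
    rw [wick]
    rw [← Finset.add_sum_erase _ _ h0]
    set H : α → β → β → ℂ := fun i j j' =>
      ((N : ℂ) + 1) * (g i j * (g i₀ j' * wick g N ((T.erase i₀).erase i) ((U.erase j').erase j)))
      with hH
    have hrest : ∑ i ∈ T.erase i₀, ∑ j ∈ U, g i j * wick g (N + 1) (T.erase i) (U.erase j)
        = ∑ i ∈ T.erase i₀, ∑ j ∈ U, ∑ j' ∈ U.erase j, H i j j' := by
      refine Finset.sum_congr rfl fun i hi => Finset.sum_congr rfl fun j hj => ?_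
      obtain ⟨hne, hiT⟩ := Finset.mem_erase.mp hi
      rw [ih (T.erase i) (U.erase j) i₀
        (Finset.mem_erase.mpr ⟨fun h => hne h.symm, h0⟩)]
      rw [Finset.mul_sum, Finset.mul_sum]
      refine Finset.sum_congr rfl fun j' hj' => ?_
      rw [Finset.erase_right_comm (a := i) (b := i₀),
        Finset.erase_right_comm (a := j) (b := j')]
      simp only [hH]
      ring
    have hswap : ∀ i, ∑ j ∈ U, ∑ j' ∈ U.erase j, H i j j'
        = ∑ j' ∈ U, ∑ j ∈ U.erase j', H i j j' := by
      intro i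
      exact Finset.sum_comm' (fun x y => by
        simp only [Finset.mem_erase, ne_eq]
        constructor
        · rintro ⟨hx, hy, hyU⟩; exact ⟨⟨fun h => hy h.symm, hx⟩, hyU⟩
        · rintro ⟨⟨hx, hxU⟩, hy⟩; exact ⟨hxU, fun h => hx h.symm, hy⟩)
    have htarget : ∀ j' ∈ U, g i₀ j' * wick g (N + 1) (T.erase i₀) (U.erase j')
        = ∑ i ∈ T.erase i₀, ∑ j ∈ (U.erase j'), g i₀ j' *
            (g i j * wick g N ((T.erase i₀).erase i) ((U.erase j').erase j)) := by
      intro j' _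
      rw [wick, Finset.mul_sum]
      refine Finset.sum_congr rfl fun i hi => ?_
      rw [Finset.mul_sum]
    rw [hrest, Finset.sum_congr rfl (fun i _ => hswap i), Finset.sum_comm]
    have : (((N : ℂ) + 1 : ℂ) + 1) * ∑ j ∈ U, g i₀ j * wick g (N + 1) (T.erase i₀) (U.erase j)
        = (∑ j ∈ U, g i₀ j * wick g (N + 1) (T.erase i₀) (U.erase j))
          + ((N : ℂ) + 1) * ∑ j ∈ U, g i₀ j * wick g (N + 1) (T.erase i₀) (U.erase j) := by
      ring
    push_cast
    rw [this]
    congr 1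
    rw [Finset.mul_sum]
    refine Finset.sum_congr rfl fun j' hj' => ?_
    rw [htarget j' hj', Finset.mul_sum]
    refine Finset.sum_congr rfl fun i hi => ?_
    rw [Finset.mul_sum]
    refine Finset.sum_congr rfl fun j hj => ?_
    simp only [hH]
    ring

theorem wick_map {α' β' : Type} [DecidableEq α'] [DecidableEq β']
    (e : α' → α) (f : β' → β) (he : Function.Injective e) (hf : Function.Injective f) :
    ∀ (N : ℕ) (T : Finset α') (U : Finset β'),
      wick (fun a b => g (e a) (f b)) N T U = wick g N (T.image e) (U.image f) := by
  intro N
  induction N with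
  | zero =>
    intro T U
    simp [wick, Finset.image_eq_empty]
  | succ N ih =>
    intro T U
    rw [wick, wick, Finset.sum_image (fun a _ b _ h => he h)]
    refine Finset.sum_congr rfl fun i hi => ?_
    rw [Finset.sum_image (fun a _ b _ h => hf h)]
    refine Finset.sum_congr rfl fun j hj => ?_
    rw [ih, Finset.image_erase he, Finset.image_erase hf]

theorem wick_perm : ∀ (n : ℕ) (g : Fin n → Fin n → ℂ),
    wick g n Finset.univ Finset.univ
      = (n.factorial : ℂ) * ∑ σ : Equiv.Perm (Fin n), ∏ i, g i (σ i) := by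
  intro n
  induction n with
  | zero =>
    intro g
    simp [wick, Finset.univ_eq_empty]
  | succ n ih =>
    intro g
    rw [wick_pick g n Finset.univ Finset.univ 0 (Finset.mem_univ 0)]
    have himg1 : (Finset.univ : Finset (Fin (n+1))).erase 0
        = Finset.image Fin.succ Finset.univ := by
      ext a
      constructor
      · intro ha
        obtain ⟨x, hx⟩ := Fin.exists_succ_eq.mpr (Finset.mem_erase.mp ha).1
        exact Finset.mem_image.mpr ⟨x, Finset.mem_univ x, hx⟩
      · intro h
        obtain ⟨x, -, rfl⟩ := Finset.mem_image.mp h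
        exact Finset.mem_erase.mpr ⟨Fin.succ_ne_zero x, Finset.mem_univ _⟩
    have himg2 : ∀ j : Fin (n+1), (Finset.univ : Finset (Fin (n+1))).erase j
        = Finset.image (fun i : Fin n => Equiv.swap 0 j i.succ) Finset.univ := by
      intro j
      ext a
      constructor
      · intro ha
        have ha' : a ≠ j := (Finset.mem_erase.mp ha).1
        have hb : Equiv.swap 0 j a ≠ 0 := fun h => ha' (by
          have := congrArg (Equiv.swap 0 j) h
          rwa [Equiv.swap_apply_self, Equiv.swap_apply_left] at this)
        obtain ⟨x, hx⟩ := Fin.exists_succ_eq.mpr hb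
        exact Finset.mem_image.mpr ⟨x, Finset.mem_univ x, by rw [hx, Equiv.swap_apply_self]⟩
      · intro h
        obtain ⟨x, -, rfl⟩ := Finset.mem_image.mp h
        refine Finset.mem_erase.mpr ⟨fun h' => ?_, Finset.mem_univ _⟩
        have := congrArg (Equiv.swap 0 j) h'
        rw [Equiv.swap_apply_self, Equiv.swap_apply_right] at this
        exact Fin.succ_ne_zero x this
    have hterm : ∀ j : Fin (n+1),
        wick g n ((Finset.univ : Finset (Fin (n+1))).erase 0) (Finset.univ.erase j)
          = (n.factorial : ℂ) * ∑ σ : Equiv.Perm (Fin n), ∏ i,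
              g i.succ (Equiv.swap 0 j (σ i).succ) := by
      intro j
      rw [himg1, himg2 j,
        ← wick_map g Fin.succ (fun i : Fin n => Equiv.swap 0 j i.succ)
          (Fin.succ_injective n) ((Equiv.swap 0 j).injective.comp (Fin.succ_injective n)),
        ih]
    have hperm : ∑ σ : Equiv.Perm (Fin (n+1)), ∏ i, g i (σ i)
        = ∑ j : Fin (n+1), ∑ σ : Equiv.Perm (Fin n),
            g 0 j * ∏ i : Fin n, g i.succ (Equiv.swap 0 j (σ i).succ) := by
      rw [← Equiv.sum_comp Equiv.Perm.decomposeFin.symm, Fintype.sum_prod_type]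
      refine Finset.sum_congr rfl fun j _ => Finset.sum_congr rfl fun σ _ => ?_
      rw [Fin.prod_univ_succ]
      simp [Equiv.Perm.decomposeFin_symm_apply_zero, Equiv.Perm.decomposeFin_symm_apply_succ]
    rw [hperm]
    simp only [hterm]
    rw [Nat.factorial_succ]
    push_cast
    simp only [Finset.mul_sum]
    refine Finset.sum_congr rfl fun j _ => Finset.sum_congr rfl fun σ _ => by ring

end WickAux

/-- The kernel of the identity operator `I : SV → SV ⊂ SV'` is the preferred
Gaussian `e^{Z_V} = Σ ζ_Vⁿ/n! ∈ SV_ℂ'`: for all `φ, ψ ∈ SV`,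
`⟨ψ|φ⟩ = e^{Z_V}(ψ₊φ₋)`. -/
theorem identity_kernel_gaussian {V A AC : Type}
    [NormedAddCommGroup V] [InnerProductSpace ℂ V] [CompleteSpace V]
    [CommRing A] [Algebra ℂ A] [CommRing AC] [Algebra ℂ AC]
    (ι : V →ₗ[ℂ] A) (hA : IsSymmAlg ι) (hspan : SpanProdsOf fun w => ι w)
    (Bf : A →ₗ⋆[ℂ] A →ₗ[ℂ] ℂ) (hB : IsCanonInner ι Bf)
    (p : A →ₐ[ℂ] AC) (m : A → AC) (hm : IsAntiAlgHom m)
    (gen : V ⊕ V → AC)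
    (hgen : ∀ w : V ⊕ V, gen w = Sum.elim (fun v => p (ι v)) (fun v => m (ι v)) w)
    (hspanC : SpanProdsOf gen)
    (mulC : (AC →ₗ⋆[ℂ] ℂ) → (AC →ₗ⋆[ℂ] ℂ) → (AC →ₗ⋆[ℂ] ℂ))
    (hmulC : IsConvProdOf gen mulC)
    (εC : AC →ₗ⋆[ℂ] ℂ) (hεC : IsCounitOf gen εC)
    (ζV : AC →ₗ⋆[ℂ] ℂ) (hζq : IsQuadOf gen ζV)
    (hζpm : ∀ x y : V, ζV (p (ι x) * m (ι y)) = (inner ℂ x y : ℂ))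
    (hζpp : ∀ x y : V, ζV (p (ι x) * p (ι y)) = 0)
    (hζmm : ∀ x y : V, ζV (m (ι x) * m (ι y)) = 0)
    -- the preferred Gaussian e^{Z_V}
    (E : AC →ₗ⋆[ℂ] ℂ) (hE : IsGaussianOf gen mulC εC ζV E) :
    ∀ φ ψ : A, Bf ψ φ = E (p ψ * m φ) := by
  -- generator simplifications
  have hgenl : ∀ v : V, gen (Sum.inl v) = p (ι v) := fun v => (hgen (Sum.inl v)).trans rfl
  have hgenr : ∀ v : V, gen (Sum.inr v) = m (ι v) := fun v => (hgen (Sum.inr v)).trans rfl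
  -- reindexing of finset products of generators
  have reindex : ∀ (ι' : Type) [DecidableEq ι'] (T : Finset ι'), ∃ w : Fin T.card → ι',
      Function.Injective w ∧ Finset.image w Finset.univ = T ∧
        ∀ f : ι' → AC, ∏ i ∈ T, f i = ∏ j, f (w j) := by
    intro ι' _ T
    refine ⟨fun j => (T.equivFin.symm j : ι'), ?_, ?_, ?_⟩
    · intro a b h
      exact T.equivFin.symm.injective (Subtype.coe_injective h)
    · ext i
      simp only [Finset.mem_image, Finset.mem_univ, true_and]
      constructor
      · rintro ⟨j, -, rfl⟩; exact (T.equivFin.symm j).2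
      · intro hi
        exact ⟨T.equivFin ⟨i, hi⟩, by simp⟩
    · intro f
      rw [← Finset.prod_coe_sort T f]
      exact (Equiv.prod_comp T.equivFin.symm (fun s : T => f s)).symm
  have hgrade : ∀ (ι' : Type) [DecidableEq ι'] (T : Finset ι') (u : ι' → V ⊕ V),
      (∏ i ∈ T, gen (u i)) ∈ GradeOf gen T.card := by
    intro ι' _ T u
    obtain ⟨w, -, -, hw⟩ := reindex ι' T
    rw [hw (fun i => gen (u i))]
    exact Submodule.subset_span ⟨u ∘ w, rfl⟩
  have hζ' : ∀ (ι' : Type) [DecidableEq ι'] (T : Finset ι') (u : ι' → V ⊕ V), T.card ≠ 2 →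
      ζV (∏ i ∈ T, gen (u i)) = 0 := fun ι' _ T u h => hζq T.card h _ (hgrade ι' T u)
  have hε' : ∀ (ι' : Type) [DecidableEq ι'] (T : Finset ι') (u : ι' → V ⊕ V),
      εC (∏ i ∈ T, gen (u i)) = if T.card = 0 then 1 else 0 := by
    intro ι' _ T u
    obtain ⟨w, -, -, hw⟩ := reindex ι' T
    rw [hw (fun i => gen (u i))]
    exact hεC T.card (u ∘ w)
  have hmul' : ∀ (ι' : Type) [DecidableEq ι'] (Φ Ψ : AC →ₗ⋆[ℂ] ℂ)
      (T : Finset ι') (u : ι' → V ⊕ V),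
      mulC Φ Ψ (∏ i ∈ T, gen (u i)) =
        ∑ S ∈ T.powerset, Φ (∏ i ∈ S, gen (u i)) * Ψ (∏ i ∈ T \ S, gen (u i)) := by
    intro ι' _ Φ Ψ T u
    obtain ⟨w, hinj, himg, hw⟩ := reindex ι' T
    have hmc := hmulC Φ Ψ T.card (u ∘ w)
    simp only [Function.comp_apply] at hmc
    rw [hw (fun i => gen (u i)), hmc]
    refine Finset.sum_bij (i := fun (S : Finset (Fin T.card)) _ => S.image w) ?_ ?_ ?_ ?_
    · intro S _
      refine Finset.mem_powerset.mpr fun b hb => ?_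
      obtain ⟨j, -, rfl⟩ := Finset.mem_image.mp hb
      rw [← himg]
      exact Finset.mem_image_of_mem w (Finset.mem_univ j)
    · intro S₁ _ S₂ _ h
      ext j
      have := Finset.ext_iff.mp h (w j)
      simpa [Finset.mem_image, hinj.eq_iff] using this
    · intro S hS
      refine ⟨Finset.univ.filter (fun j => w j ∈ S), Finset.mem_univ _, ?_⟩
      ext b
      simp only [Finset.mem_image, Finset.mem_filter, Finset.mem_univ, true_and]
      constructor
      · rintro ⟨j, hj, rfl⟩; exact hj
      · intro hb
        have hbT : b ∈ T := Finset.mem_powerset.mp hS hb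
        rw [← himg] at hbT
        obtain ⟨j, -, rfl⟩ := Finset.mem_image.mp hbT
        exact ⟨j, hb, rfl⟩
    · intro S _
      show Φ (∏ x ∈ S, gen (u (w x))) * Ψ (∏ x ∈ Sᶜ, gen (u (w x)))
          = Φ (∏ i ∈ Finset.image w S, gen (u i)) * Ψ (∏ i ∈ T \ Finset.image w S, gen (u i))
      have e1 : ∏ i ∈ Finset.image w S, gen (u i) = ∏ x ∈ S, gen (u (w x)) :=
        Finset.prod_image (fun a _ b _ h => hinj h)
      have e2 : T \ Finset.image w S = Finset.image w Sᶜ := by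
        rw [Finset.compl_eq_univ_sdiff, Finset.image_sdiff _ _ hinj, himg]
      have e3 : ∏ i ∈ Finset.image w Sᶜ, gen (u i) = ∏ x ∈ Sᶜ, gen (u (w x)) :=
        Finset.prod_image (fun a _ b _ h => hinj h)
      rw [e1, e2, e3]
  -- sdiff of a mixed pair in a disjoint sum
  have hdiff : ∀ (k n : ℕ) (T : Finset (Fin k)) (U : Finset (Fin n)) (i : Fin k) (j : Fin n),
      T.disjSum U \ ({Sum.inl i, Sum.inr j} : Finset (Fin k ⊕ Fin n))
        = (T.erase i).disjSum (U.erase j) := by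
    intro k n T U i j
    ext c
    rcases c with a | b
    · simp only [Finset.mem_sdiff, Finset.inl_mem_disjSum, Finset.mem_insert,
        Finset.mem_singleton, Finset.mem_erase]
      constructor
      · rintro ⟨ha, hne⟩
        exact ⟨fun h => hne (Or.inl (by rw [h])), ha⟩
      · rintro ⟨hne, ha⟩
        refine ⟨ha, ?_⟩
        rintro (h | h)
        · exact hne (Sum.inl_injective h)
        · exact Sum.inl_ne_inr h
    · simp only [Finset.mem_sdiff, Finset.inr_mem_disjSum, Finset.mem_insert,
        Finset.mem_singleton, Finset.mem_erase]
      constructor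
      · rintro ⟨hb, hne⟩
        exact ⟨fun h => hne (Or.inr (by rw [h])), hb⟩
      · rintro ⟨hne, hb⟩
        refine ⟨hb, ?_⟩
        rintro (h | h)
        · exact Sum.inr_ne_inl h
        · exact hne (Sum.inr_injective h)
  -- the powers of the quadratic compute the Wick sums
  have hpow : ∀ (N k n : ℕ) (xx : Fin k → V) (yy : Fin n → V)
      (T : Finset (Fin k)) (U : Finset (Fin n)),
      powD mulC εC ζV N (∏ c ∈ T.disjSum U,
          gen (Sum.elim (fun i => Sum.inl (xx i)) (fun j => Sum.inr (yy j)) c))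
        = wick (fun i j => (inner ℂ (xx i) (yy j) : ℂ)) N T U := by
    intro N
    induction N with
    | zero =>
      intro k n xx yy T U
      show εC _ = _
      rw [hε' _ (T.disjSum U) _]
      simp [wick, Finset.card_disjSum, Nat.add_eq_zero, Finset.card_eq_zero]
    | succ N ih =>
      intro k n xx yy T U
      set u : Fin k ⊕ Fin n → V ⊕ V :=
        Sum.elim (fun i => Sum.inl (xx i)) (fun j => Sum.inr (yy j)) with hu
      show mulC ζV (powD mulC εC ζV N) _ = _
      rw [hmul' _ ζV (powD mulC εC ζV N) (T.disjSum U) u]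
      rw [wick]
      have hsub : Finset.image
          (fun q : Fin k × Fin n => ({Sum.inl q.1, Sum.inr q.2} : Finset (Fin k ⊕ Fin n)))
          (T ×ˢ U) ⊆ (T.disjSum U).powerset := by
        intro S hS
        obtain ⟨⟨i, j⟩, hq, rfl⟩ := Finset.mem_image.mp hS
        obtain ⟨hi, hj⟩ := Finset.mem_product.mp hq
        exact Finset.mem_powerset.mpr (Finset.insert_subset
          (Finset.inl_mem_disjSum.mpr hi)
          (Finset.singleton_subset_iff.mpr (Finset.inr_mem_disjSum.mpr hj)))
      have hzero : ∀ S ∈ (T.disjSum U).powerset,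
          S ∉ Finset.image
            (fun q : Fin k × Fin n => ({Sum.inl q.1, Sum.inr q.2} : Finset (Fin k ⊕ Fin n)))
            (T ×ˢ U) →
          ζV (∏ i ∈ S, gen (u i)) *
            powD mulC εC ζV N (∏ i ∈ T.disjSum U \ S, gen (u i)) = 0 := by
        intro S hS hSim
        by_cases hc : S.card = 2
        · obtain ⟨a, b, hab, rfl⟩ := Finset.card_eq_two.mp hc
          have hsub' : ({a, b} : Finset (Fin k ⊕ Fin n)) ⊆ T.disjSum U :=
            Finset.mem_powerset.mp hS
          have hprod : (∏ c ∈ ({a, b} : Finset (Fin k ⊕ Fin n)), gen (u c))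
              = gen (u a) * gen (u b) := Finset.prod_pair hab
          rcases a with i | j <;> rcases b with i' | j'
          · rw [hprod]
            have : ζV (gen (u (Sum.inl i)) * gen (u (Sum.inl i'))) = 0 := by
              show ζV (gen (Sum.inl (xx i)) * gen (Sum.inl (xx i'))) = 0
              rw [hgenl, hgenl]
              exact hζpp _ _
            rw [this, zero_mul]
          · exfalso
            apply hSim
            refine Finset.mem_image.mpr ⟨(i, j'), Finset.mem_product.mpr ⟨?_, ?_⟩, rfl⟩
            · exact Finset.inl_mem_disjSum.mp (hsub' (Finset.mem_insert_self _ _))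
            · exact Finset.inr_mem_disjSum.mp
                (hsub' (Finset.mem_insert_of_mem (Finset.mem_singleton_self _)))
          · exfalso
            apply hSim
            refine Finset.mem_image.mpr ⟨(i', j), Finset.mem_product.mpr ⟨?_, ?_⟩, ?_⟩
            · exact Finset.inl_mem_disjSum.mp
                (hsub' (Finset.mem_insert_of_mem (Finset.mem_singleton_self _)))
            · exact Finset.inr_mem_disjSum.mp (hsub' (Finset.mem_insert_self _ _))
            · exact (Finset.pair_comm _ _).symm
          · rw [hprod]
            have : ζV (gen (u (Sum.inr j)) * gen (u (Sum.inr j'))) = 0 := by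
              show ζV (gen (Sum.inr (yy j)) * gen (Sum.inr (yy j'))) = 0
              rw [hgenr, hgenr]
              exact hζmm _ _
            rw [this, zero_mul]
        · rw [hζ' _ S u hc, zero_mul]
      rw [← Finset.sum_subset hsub hzero]
      rw [Finset.sum_image ?hinj2]
      case hinj2 =>
        rintro ⟨i, j⟩ - ⟨i', j'⟩ - h
        have h1 : (Sum.inl i : Fin k ⊕ Fin n) ∈
            ({Sum.inl i', Sum.inr j'} : Finset (Fin k ⊕ Fin n)) :=
          by
            have h' : ({Sum.inl i, Sum.inr j} : Finset (Fin k ⊕ Fin n)) = {Sum.inl i', Sum.inr j'} := h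
            exact h' ▸ Finset.mem_insert_self _ _
        have h2 : (Sum.inr j : Fin k ⊕ Fin n) ∈
            ({Sum.inl i', Sum.inr j'} : Finset (Fin k ⊕ Fin n)) :=
          by
            have h' : ({Sum.inl i, Sum.inr j} : Finset (Fin k ⊕ Fin n)) = {Sum.inl i', Sum.inr j'} := h
            exact h' ▸ Finset.mem_insert_of_mem (Finset.mem_singleton_self _)
        have hi : i = i' := by
          rcases Finset.mem_insert.mp h1 with h' | h'
          · exact Sum.inl_injective h'
          · exact absurd (Finset.mem_singleton.mp h') (Sum.inl_ne_inr)
        have hj : j = j' := by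
          rcases Finset.mem_insert.mp h2 with h' | h'
          · exact absurd h' (Sum.inr_ne_inl)
          · exact Sum.inr_injective (Finset.mem_singleton.mp h')
        simp [hi, hj]
      rw [Finset.sum_product]
      refine Finset.sum_congr rfl fun i hi => Finset.sum_congr rfl fun j hj => ?_
      have hpair : (∏ c ∈ ({Sum.inl i, Sum.inr j} : Finset (Fin k ⊕ Fin n)), gen (u c))
          = gen (u (Sum.inl i)) * gen (u (Sum.inr j)) :=
        Finset.prod_pair (by simp)
      rw [hpair]
      have h1 : ζV (gen (u (Sum.inl i)) * gen (u (Sum.inr j))) = (inner ℂ (xx i) (yy j) : ℂ) := by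
        show ζV (gen (Sum.inl (xx i)) * gen (Sum.inr (yy j))) = _
        rw [hgenl, hgenr]
        exact hζpm _ _
      rw [h1, hdiff k n T U i j, ih k n xx yy (T.erase i) (U.erase j)]
  -- core computation on products of generators
  have core : ∀ (k n : ℕ) (xx : Fin k → V) (yy : Fin n → V),
      Bf (∏ i, ι (xx i)) (∏ j, ι (yy j)) = E (p (∏ i, ι (xx i)) * m (∏ j, ι (yy j))) := by
    intro k n xx yy
    have hp : p (∏ i, ι (xx i)) = ∏ i, p (ι (xx i)) := map_prod p _ _
    have hmp : ∀ s : Finset (Fin n), m (∏ j ∈ s, ι (yy j)) = ∏ j ∈ s, m (ι (yy j)) := by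
      intro s
      induction s using Finset.cons_induction with
      | empty => simpa using hm.2.2.2
      | cons a s ha ih => rw [Finset.prod_cons, Finset.prod_cons, hm.2.2.1, ih]
    set u : Fin k ⊕ Fin n → V ⊕ V :=
      Sum.elim (fun i => Sum.inl (xx i)) (fun j => Sum.inr (yy j)) with hu
    have hcomb : p (∏ i, ι (xx i)) * m (∏ j, ι (yy j))
        = ∏ c ∈ (Finset.univ.disjSum Finset.univ : Finset (Fin k ⊕ Fin n)), gen (u c) := by
      rw [hp]
      rw [hmp Finset.univ]
      rw [Finset.prod_disjSum (Finset.univ : Finset (Fin k)) (Finset.univ : Finset (Fin n))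
          (fun c => gen (u c))]
      congr 1
      · exact Finset.prod_congr rfl fun i _ => (hgenl (xx i)).symm
      · exact Finset.prod_congr rfl fun j _ => (hgenr (yy j)).symm
    have hcard : ((Finset.univ.disjSum Finset.univ : Finset (Fin k ⊕ Fin n))).card = k + n := by
      simp [Finset.card_disjSum]
    have hgr : (∏ c ∈ (Finset.univ.disjSum Finset.univ : Finset (Fin k ⊕ Fin n)), gen (u c))
        ∈ GradeOf gen (k + n) := by
      have := hgrade (Fin k ⊕ Fin n) (Finset.univ.disjSum Finset.univ) u
      rwa [hcard] at this
    rw [hcomb, hE (k + n) _ hgr]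
    have hval : ∀ N, powD mulC εC ζV N
        (∏ c ∈ (Finset.univ.disjSum Finset.univ : Finset (Fin k ⊕ Fin n)), gen (u c))
        = wick (fun i j => (inner ℂ (xx i) (yy j) : ℂ)) N Finset.univ Finset.univ :=
      fun N => hpow N k n xx yy Finset.univ Finset.univ
    rw [Finset.sum_congr rfl fun N _ => by rw [hval N]]
    by_cases hkn : k = n
    · subst hkn
      rw [Finset.sum_eq_single k]
      · rw [wick_perm k (fun i j => (inner ℂ (xx i) (yy j) : ℂ)), ← mul_assoc,
          inv_mul_cancel₀ (Nat.cast_ne_zero.mpr (Nat.factorial_ne_zero k)), one_mul]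
        exact hB.2 k xx yy
      · intro N _ hne
        rw [wick_eq_zero_left _ N _ _ (by
          rw [Finset.card_univ, Fintype.card_fin]
          exact fun h => hne h.symm), mul_zero]
      · intro h
        exact absurd (Finset.mem_range.mpr (by omega)) h
    · rw [hB.1 k n hkn xx yy]
      symm
      refine Finset.sum_eq_zero fun N _ => ?_
      by_cases hNk : N = k
      · subst hNk
        rw [wick_eq_zero_right _ N _ _ (by
          rw [Finset.card_univ, Fintype.card_fin]
          exact fun h => hkn h.symm), mul_zero]
      · rw [wick_eq_zero_left _ N _ _ (by
          rw [Finset.card_univ, Fintype.card_fin]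
          exact fun h => hNk h.symm), mul_zero]
  -- m kills zero
  have hm0 : m 0 = 0 := by
    have h := hm.1 0 0
    rw [add_zero] at h
    exact left_eq_add.mp h
  -- extend by (anti)linearity
  intro φ ψ
  induction hspan ψ using Submodule.span_induction with
  | mem a ha =>
    obtain ⟨k, xx, rfl⟩ := ha
    induction hspan φ using Submodule.span_induction with
    | mem b hb =>
      obtain ⟨n, yy, rfl⟩ := hb
      exact core k n xx yy
    | zero =>
      rw [hm0, mul_zero, map_zero, map_zero]
    | add b c _ _ hb hc =>
      rw [map_add, hm.1, mul_add, map_add, hb, hc]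
    | smul r b _ hb =>
      rw [map_smul, hm.2.1, mul_smul_comm, map_smulₛₗ, hb]
      simp
  | zero =>
    rw [map_zero, LinearMap.zero_apply, map_zero, zero_mul, map_zero]
  | add a b _ _ ha hb =>
    rw [map_add, LinearMap.add_apply, map_add, add_mul, map_add, ha, hb]
  | smul r a _ ha =>
    rw [map_smulₛₗ, LinearMap.smul_apply, map_smul, smul_mul_assoc, map_smulₛₗ, ha]
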